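/- Let {f̂(n)}_{n≥0} ∈ GBV and {f̂(n) + f̂(−n)}_{n≥1} ∈ GBV, and suppose the series f(x) = Σ_{n=−∞}^{∞} f̂(n)e^{inx} converges at every x to a continuous function f ∈ C_{2π}. Then there exists C > 0 such that for all sufficiently large n: sup_{k≥2n+1} k·|f̂(k)| ≤ C·( max_{1≤k≤n} k·|f̂(n+k)| + sup_{k≥2n+1} k·|f̂(k) − f̂(−k)| + Σ_{k=2n+1}^{∞} |f̂(k) + f̂(−k)| ). -/

import Mathlib

open Filter Complex Real
open scoped ENNReal NNReal

noncomputable section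

namespace Stmt15Aux

lemma sup_mem_le (f : ℕ → ℝ) (hf : ∀ i, 0 ≤ f i) (s : Finset ℕ) {i : ℕ} (hi : i ∈ s) :
    f i ≤ ⨆ j ∈ s, f j := by
  have hb : ∀ j : ℕ, (⨆ _ : j ∈ s, f j) ≤ ∑ l ∈ s, f l := by
    intro j
    by_cases hj : j ∈ s
    · rw [ciSup_pos hj]
      exact Finset.single_le_sum (fun l _ => hf l) hj
    · haveI : IsEmpty (j ∈ s) := ⟨hj⟩
      rw [Real.iSup_of_isEmpty]
      exact Finset.sum_nonneg fun l _ => hf l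
  have hbdd : BddAbove (Set.range fun j => ⨆ _ : j ∈ s, f j) := by
    refine ⟨∑ l ∈ s, f l, ?_⟩
    rintro _ ⟨j, rfl⟩
    exact hb j
  have heq : (⨆ _ : i ∈ s, f i) = f i := ciSup_pos hi
  calc f i = ⨆ _ : i ∈ s, f i := heq.symm
    _ ≤ ⨆ j, ⨆ _ : j ∈ s, f j := le_ciSup hbdd i

lemma sup_le_of (f : ℕ → ℝ) (s : Finset ℕ) {x : ℝ} (hx : 0 ≤ x)
    (h : ∀ i ∈ s, f i ≤ x) : (⨆ j ∈ s, f j) ≤ x := by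
  refine ciSup_le fun j => ?_
  by_cases hj : j ∈ s
  · rw [ciSup_pos hj]; exact h j hj
  · haveI : IsEmpty (j ∈ s) := ⟨hj⟩
    rw [Real.iSup_of_isEmpty]; exact hx

lemma exists_sup_le (f : ℕ → ℝ) (hf : ∀ i, 0 ≤ f i) {s : Finset ℕ} (hs : s.Nonempty) :
    ∃ i ∈ s, (⨆ j ∈ s, f j) ≤ f i := by
  obtain ⟨b, hb, hmax⟩ := s.exists_max_image f hs
  exact ⟨b, hb, sup_le_of f s (hf b) hmax⟩

lemma tel (c : ℕ → ℂ) (m : ℕ) : ∀ k, m ≤ k →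
    ‖c k - c m‖ ≤ ∑ i ∈ Finset.Ico m k, ‖c i - c (i + 1)‖ := by
  intro k hk
  induction k, hk using Nat.le_induction with
  | base => simp
  | succ k hk ih =>
    rw [Finset.sum_Ico_succ_top hk]
    have hsplit : c (k + 1) - c m = (c k - c m) + -(c k - c (k + 1)) := by ring
    calc ‖c (k + 1) - c m‖
        ≤ ‖c k - c m‖ + ‖-(c k - c (k + 1))‖ := by
          rw [hsplit]; exact norm_add_le _ _
      _ = ‖c k - c m‖ + ‖c k - c (k + 1)‖ := by
          rw [norm_neg]
      _ ≤ _ := by gcongr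

lemma block (c : ℕ → ℂ) (N : ℕ) (M : ℝ)
    (hvar : ∀ m, 1 ≤ m → (∑ i ∈ Finset.Icc m (2 * m), ‖c i - c (i + 1)‖) ≤
      M * ⨆ i ∈ Finset.Ico m (m + N), ‖c i‖)
    {m k : ℕ} (hm : 1 ≤ m) (hmk : m ≤ k) (hk2 : k ≤ 2 * m + 1) :
    ‖c k‖ ≤ ‖c m‖ +
      M * ⨆ i ∈ Finset.Ico m (m + N), ‖c i‖ := by
  have h1 : ‖c k‖ ≤ ‖c m‖ + ‖c k - c m‖ := by
    have := norm_add_le (c m) (c k - c m)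
    simpa using this
  have h2 : ‖c k - c m‖ ≤ ∑ i ∈ Finset.Ico m k, ‖c i - c (i + 1)‖ :=
    tel c m k hmk
  have h3 : ∑ i ∈ Finset.Ico m k, ‖c i - c (i + 1)‖ ≤
      ∑ i ∈ Finset.Icc m (2 * m), ‖c i - c (i + 1)‖ := by
    apply Finset.sum_le_sum_of_subset_of_nonneg
    · intro i hi
      simp only [Finset.mem_Ico] at hi
      simp only [Finset.mem_Icc]
      omega
    · intro i _ _; exact norm_nonneg _
  have := hvar m hm
  linarith

set_option maxHeartbeats 1000000 in
lemma core (c e : ℕ → ℂ) (N : ℕ) (hN : 1 ≤ N) (M : ℝ) (hM : 0 < M)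
    (hvar : ∀ m, 1 ≤ m → (∑ i ∈ Finset.Icc m (2 * m), ‖c i - c (i + 1)‖) ≤
      M * ⨆ i ∈ Finset.Ico m (m + N), ‖c i‖)
    (n k : ℕ) (hn : 2 * N + 2 ≤ n) (hk : 2 * n + 1 ≤ k)
    (a b dr : ℝ) (ha : 0 ≤ a) (hb : 0 ≤ b) (hdr : 0 ≤ dr)
    (hP1 : ∀ t, 1 ≤ t → t ≤ n → (t : ℝ) * ‖c (n + t)‖ ≤ a)
    (hP2 : ∀ j, 2 * n + 1 ≤ j → (j : ℝ) * ‖c j - e j‖ ≤ b)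
    (hP3 : ∀ K, (∑ j ∈ Finset.Ico (2 * n + 1) K, ‖c j + e j‖) ≤ dr) :
    (k : ℝ) * ‖c k‖ ≤ (8 * (N + 2) ^ 2 * (1 + M)) * (a + b + dr) := by
  have habs : ∀ j : ℕ, (0:ℝ) ≤ ‖c j‖ := fun j => norm_nonneg _
  have hN1 : (1:ℝ) ≤ (N:ℝ) := by exact_mod_cast hN
  by_cases hcase : k + 2 * N ≤ 4 * n + 1
  · -- Case I : moderate k, use a single block with window inside (n, 2n]
    have ht01 : 1 ≤ n - N := by omega
    have ht0pos : (0:ℝ) < ((n - N : ℕ):ℝ) := by exact_mod_cast (by omega : 0 < n - N)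
    have hwin : ∀ i ∈ Finset.Ico (n + (n - N)) (n + (n - N) + N),
        ‖c i‖ ≤ a / ((n - N : ℕ):ℝ) := by
      intro i hi
      simp only [Finset.mem_Ico] at hi
      have ht := hP1 (i - n) (by omega) (by omega)
      have hi' : n + (i - n) = i := by omega
      rw [hi'] at ht
      rw [le_div_iff₀ ht0pos]
      have hcast : ((n - N : ℕ):ℝ) ≤ ((i - n : ℕ):ℝ) := by exact_mod_cast (by omega : n - N ≤ i - n)
      nlinarith [habs i, mul_le_mul_of_nonneg_left hcast (habs i)]
    have hWm : (⨆ i ∈ Finset.Ico (n + (n - N)) (n + (n - N) + N), ‖c i‖)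
        ≤ a / ((n - N : ℕ):ℝ) :=
      sup_le_of _ _ (div_nonneg ha ht0pos.le) hwin
    have hcm : ‖c (n + (n - N))‖ ≤ a / ((n - N : ℕ):ℝ) := by
      have ht := hP1 (n - N) ht01 (by omega)
      rw [le_div_iff₀ ht0pos]
      nlinarith [habs (n + (n - N))]
    have hblk := block c N M hvar (m := n + (n - N)) (k := k) (by omega) (by omega) (by omega)
    have hck : ‖c k‖ ≤ (1 + M) * (a / ((n - N : ℕ):ℝ)) := by
      nlinarith [hblk, hWm, hcm, hM.le, mul_le_mul_of_nonneg_left hWm hM.le]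
    have hk8 : (k:ℝ) ≤ 8 * ((n - N : ℕ):ℝ) := by exact_mod_cast (by omega : k ≤ 8 * (n - N))
    have hmain : (k : ℝ) * ‖c k‖ ≤ 8 * ((n - N : ℕ):ℝ) * ((1 + M) * (a / ((n - N : ℕ):ℝ))) :=
      mul_le_mul hk8 hck (habs k) (by positivity)
    have heq : 8 * ((n - N : ℕ):ℝ) * ((1 + M) * (a / ((n - N : ℕ):ℝ))) = 8 * (1 + M) * a := by
      field_simp
    rw [heq] at hmain
    have hx1 : (0:ℝ) ≤ ((N:ℝ) + 2) ^ 2 - 1 := by nlinarith [hN1]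
    have he1 : 8 * (1 + M) * a ≤ 8 * (1 + M) * (a + b + dr) := by
      apply mul_le_mul_of_nonneg_left (by linarith) (by linarith)
    have he2 : 8 * (1 + M) * (a + b + dr) ≤ (8 * ((N:ℝ) + 2) ^ 2 * (1 + M)) * (a + b + dr) := by
      nlinarith [mul_nonneg (mul_nonneg (show (0:ℝ) ≤ 8 * (1 + M) by linarith)
        (show (0:ℝ) ≤ a + b + dr by linarith)) hx1]
    calc (k : ℝ) * ‖c k‖ ≤ 8 * (1 + M) * a := hmain
      _ ≤ _ := by push_cast; linarith
  · -- Case II : large k, use many windows in [k/2, k]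
    push_neg at hcase
    have hm01 : 1 ≤ k / 2 := by omega
    have hdm := Nat.div_add_mod (k - k / 2) N
    set m₀ := k / 2 with hm0def
    set T := (k - m₀) / N with hTdef
    set r := (k - m₀) % N with hrdef
    have hrN : r < N := Nat.mod_lt _ (by omega)
    set q := N * T with hqdef
    have hq : q + r = k - m₀ := hdm
    have hkT : k ≤ 4 * q := by omega
    -- one large value in each window
    have hwin : ∀ t : ℕ, ∃ i : ℕ, t < T →
        (m₀ + t * N ≤ i ∧ i < m₀ + t * N + N) ∧
          ‖c k‖ ≤ (1 + M) * ‖c i‖ := by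
      intro t
      by_cases ht : t < T
      · have htN : t * N + N ≤ q := by
          have h1 : (t + 1) * N ≤ T * N := Nat.mul_le_mul_right N (by omega)
          have h2 : T * N = q := by rw [hqdef, Nat.mul_comm]
          calc t * N + N = (t + 1) * N := by ring
            _ ≤ T * N := h1
            _ = q := h2
        have hmtk : m₀ + t * N + N ≤ k := by
          have hq2 : q ≤ k - m₀ := by omega
          generalize t * N = y at htN ⊢
          omega
        have hblk := block c N M hvar (m := m₀ + t * N) (k := k) (by omega) (by omega) (by omega)
        have hmem : m₀ + t * N ∈ Finset.Ico (m₀ + t * N) (m₀ + t * N + N) := by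
          simp only [Finset.mem_Ico]
          omega
        have hle : ‖c (m₀ + t * N)‖ ≤
            ⨆ i ∈ Finset.Ico (m₀ + t * N) (m₀ + t * N + N), ‖c i‖ :=
          sup_mem_le _ habs _ hmem
        obtain ⟨i, hi, hsup⟩ := exists_sup_le (fun j => ‖c j‖) habs
          (s := Finset.Ico (m₀ + t * N) (m₀ + t * N + N)) ⟨m₀ + t * N, hmem⟩
        simp only [Finset.mem_Ico] at hi
        refine ⟨i, fun _ => ⟨⟨hi.1, hi.2⟩, ?_⟩⟩
        have hsupnn : (0:ℝ) ≤ ⨆ j ∈ Finset.Ico (m₀ + t * N) (m₀ + t * N + N), ‖c j‖ :=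
          le_trans (habs _) hle
        nlinarith [hblk, hle, hsup, hM.le, habs i]
      · exact ⟨0, fun h => absurd h ht⟩
    choose g hg using hwin
    have hsum1 : (T:ℝ) * ‖c k‖ ≤
        (1 + M) * ∑ t ∈ Finset.range T, ‖c (g t)‖ := by
      calc (T:ℝ) * ‖c k‖ = ∑ _t ∈ Finset.range T, ‖c k‖ := by
            simp [Finset.sum_const, Finset.card_range, nsmul_eq_mul]
        _ ≤ ∑ t ∈ Finset.range T, (1 + M) * ‖c (g t)‖ :=
            Finset.sum_le_sum fun t ht => (hg t (Finset.mem_range.1 ht)).2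
        _ = (1 + M) * ∑ t ∈ Finset.range T, ‖c (g t)‖ := by
            rw [Finset.mul_sum]
    have hginj : ∀ t1 ∈ Finset.range T, ∀ t2 ∈ Finset.range T, g t1 = g t2 → t1 = t2 := by
      intro t1 h1 t2 h2 heq
      have b1 := (hg t1 (Finset.mem_range.1 h1)).1
      have b2 := (hg t2 (Finset.mem_range.1 h2)).1
      by_contra hne
      rcases Nat.lt_or_ge t1 t2 with hlt | hge
      · have hmul : t1 * N + N ≤ t2 * N := by
          have := Nat.mul_le_mul_right N (show t1 + 1 ≤ t2 by omega)
          calc t1 * N + N = (t1 + 1) * N := by ring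
            _ ≤ t2 * N := this
        generalize t1 * N = y1 at b1 hmul
        generalize t2 * N = y2 at b2 hmul
        omega
      · have hlt2 : t2 < t1 := by omega
        have hmul : t2 * N + N ≤ t1 * N := by
          have := Nat.mul_le_mul_right N (show t2 + 1 ≤ t1 by omega)
          calc t2 * N + N = (t2 + 1) * N := by ring
            _ ≤ t1 * N := this
        generalize t1 * N = y1 at b1 hmul
        generalize t2 * N = y2 at b2 hmul
        omega
    have himg : ∀ t ∈ Finset.range T, g t ∈ Finset.Ico m₀ k := by
      intro t ht
      have b := (hg t (Finset.mem_range.1 ht)).1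
      have htN : t * N + N ≤ q := by
        have h1 : (t + 1) * N ≤ T * N := Nat.mul_le_mul_right N (Finset.mem_range.1 ht)
        have h2 : T * N = q := by rw [hqdef, Nat.mul_comm]
        calc t * N + N = (t + 1) * N := by ring
          _ ≤ T * N := h1
          _ = q := h2
      simp only [Finset.mem_Ico]
      have hq2 : q ≤ k - m₀ := by omega
      generalize t * N = y at b htN
      omega
    have hsum2 : ∑ t ∈ Finset.range T, ‖c (g t)‖ ≤
        ∑ j ∈ Finset.Ico m₀ k, ‖c j‖ := by
      rw [show ∑ t ∈ Finset.range T, ‖c (g t)‖ =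
          ∑ j ∈ (Finset.range T).image g, ‖c j‖ from
          (Finset.sum_image (f := fun j => ‖c j‖) hginj).symm]
      exact Finset.sum_le_sum_of_subset_of_nonneg (Finset.image_subset_iff.2 himg)
        (fun _ _ _ => habs _)
    -- split the sum at 2n using K₀ = max m₀ (2n+1)
    have hK0a : m₀ ≤ max m₀ (2 * n + 1) := le_max_left _ _
    have hK0b : max m₀ (2 * n + 1) ≤ k := by
      apply max_le _ (by omega)
      omega
    have hsplit : ∑ j ∈ Finset.Ico m₀ (max m₀ (2 * n + 1)), ‖c j‖
        + ∑ j ∈ Finset.Ico (max m₀ (2 * n + 1)) k, ‖c j‖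
        = ∑ j ∈ Finset.Ico m₀ k, ‖c j‖ :=
      Finset.sum_Ico_consecutive _ hK0a hK0b
    have hpart1 : ∑ j ∈ Finset.Ico m₀ (max m₀ (2 * n + 1)), ‖c j‖ ≤ (N:ℝ) * a := by
      have hcard : (Finset.Ico m₀ (max m₀ (2 * n + 1))).card ≤ N := by
        rw [Nat.card_Ico]
        omega
      have heach : ∀ j ∈ Finset.Ico m₀ (max m₀ (2 * n + 1)), ‖c j‖ ≤ a := by
        intro j hj
        simp only [Finset.mem_Ico, lt_max_iff] at hj
        have hjn : n + 1 ≤ j ∧ j ≤ 2 * n := by omega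
        have ht := hP1 (j - n) (by omega) (by omega)
        have hj' : n + (j - n) = j := by omega
        rw [hj'] at ht
        have h1 : (1:ℝ) ≤ ((j - n : ℕ):ℝ) := by exact_mod_cast (by omega : 1 ≤ j - n)
        nlinarith [habs j]
      calc ∑ j ∈ Finset.Ico m₀ (max m₀ (2 * n + 1)), ‖c j‖
          ≤ (Finset.Ico m₀ (max m₀ (2 * n + 1))).card • a :=
            Finset.sum_le_card_nsmul _ _ _ heach
        _ = ((Finset.Ico m₀ (max m₀ (2 * n + 1))).card : ℝ) * a := by rw [nsmul_eq_mul]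
        _ ≤ (N:ℝ) * a := by
            apply mul_le_mul_of_nonneg_right _ ha
            exact_mod_cast hcard
    have hm0pos : (0:ℝ) < (m₀:ℝ) := by exact_mod_cast hm01
    have hpart2 : ∑ j ∈ Finset.Ico (max m₀ (2 * n + 1)) k, ‖c j‖ ≤ b + dr := by
      have hhalf : ∀ j ∈ Finset.Ico (max m₀ (2 * n + 1)) k, 2 * ‖c j‖ ≤
          ‖c j + e j‖ + ‖c j - e j‖ := by
        intro j _
        have h2 : (2:ℂ) * c j = (c j + e j) + (c j - e j) := by ring
        have h3 := norm_add_le (c j + e j) (c j - e j)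
        rw [← h2] at h3
        rw [norm_mul] at h3
        simpa [Complex.norm_two] using h3
      have hs : ∑ j ∈ Finset.Ico (max m₀ (2 * n + 1)) k, ‖c j + e j‖ ≤ dr := by
        refine le_trans (Finset.sum_le_sum_of_subset_of_nonneg ?_
          (fun _ _ _ => norm_nonneg _)) (hP3 k)
        intro j hj
        simp only [Finset.mem_Ico, max_le_iff] at hj ⊢
        omega
      have hd : ∑ j ∈ Finset.Ico (max m₀ (2 * n + 1)) k, ‖c j - e j‖ ≤ 2 * b := by
        have heach : ∀ j ∈ Finset.Ico (max m₀ (2 * n + 1)) k,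
            ‖c j - e j‖ ≤ b / (m₀:ℝ) := by
          intro j hj
          simp only [Finset.mem_Ico, max_le_iff] at hj
          have ht := hP2 j (by omega)
          rw [le_div_iff₀ hm0pos]
          have hcast : ((m₀:ℕ):ℝ) ≤ ((j:ℕ):ℝ) := by exact_mod_cast hj.1.1
          nlinarith [norm_nonneg (c j - e j),
            mul_le_mul_of_nonneg_left hcast (norm_nonneg (c j - e j))]
        have hcard : (Finset.Ico (max m₀ (2 * n + 1)) k).card ≤ k - m₀ := by
          rw [Nat.card_Ico]
          omega
        have hkm : ((k - m₀ : ℕ):ℝ) ≤ 2 * (m₀:ℝ) := by exact_mod_cast (by omega : k - m₀ ≤ 2 * m₀)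
        calc ∑ j ∈ Finset.Ico (max m₀ (2 * n + 1)) k, ‖c j - e j‖
            ≤ (Finset.Ico (max m₀ (2 * n + 1)) k).card • (b / (m₀:ℝ)) :=
              Finset.sum_le_card_nsmul _ _ _ heach
          _ = ((Finset.Ico (max m₀ (2 * n + 1)) k).card : ℝ) * (b / (m₀:ℝ)) := by
              rw [nsmul_eq_mul]
          _ ≤ ((k - m₀ : ℕ):ℝ) * (b / (m₀:ℝ)) := by
              apply mul_le_mul_of_nonneg_right _ (by positivity)
              exact_mod_cast hcard
          _ ≤ 2 * (m₀:ℝ) * (b / (m₀:ℝ)) := mul_le_mul_of_nonneg_right hkm (by positivity)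
          _ = 2 * b := by field_simp
      have hsum3 := Finset.sum_le_sum hhalf
      rw [Finset.sum_add_distrib] at hsum3
      have h2S : 2 * ∑ j ∈ Finset.Ico (max m₀ (2 * n + 1)) k, ‖c j‖
          = ∑ j ∈ Finset.Ico (max m₀ (2 * n + 1)) k, 2 * ‖c j‖ := by
        rw [Finset.mul_sum]
      have hnn : (0:ℝ) ≤ ∑ j ∈ Finset.Ico (max m₀ (2 * n + 1)) k, ‖c j‖ :=
        Finset.sum_nonneg fun j _ => habs j
      linarith
    have hS : ∑ j ∈ Finset.Ico m₀ k, ‖c j‖ ≤ (N:ℝ) * a + (b + dr) := by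
      rw [← hsplit]
      linarith
    have hTk : (k:ℝ) ≤ 4 * ((N:ℝ) * (T:ℝ)) := by
      have : (k:ℝ) ≤ ((4 * q : ℕ):ℝ) := by exact_mod_cast hkT
      calc (k:ℝ) ≤ ((4 * q : ℕ):ℝ) := this
        _ = 4 * ((N:ℝ) * (T:ℝ)) := by rw [hqdef]; push_cast; ring
    have h1 : (T:ℝ) * ‖c k‖ ≤ (1 + M) * ((N:ℝ) * a + (b + dr)) := by
      refine le_trans hsum1 (mul_le_mul_of_nonneg_left (le_trans hsum2 hS) (by linarith))
    have h2 : (k:ℝ) * ‖c k‖ ≤ 4 * (N:ℝ) * ((T:ℝ) * ‖c k‖) := by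
      have := mul_le_mul_of_nonneg_right hTk (habs k)
      calc (k:ℝ) * ‖c k‖ ≤ 4 * ((N:ℝ) * (T:ℝ)) * ‖c k‖ := this
        _ = 4 * (N:ℝ) * ((T:ℝ) * ‖c k‖) := by ring
    have h3 : (k:ℝ) * ‖c k‖ ≤ 4 * (N:ℝ) * ((1 + M) * ((N:ℝ) * a + (b + dr))) :=
      le_trans h2 (mul_le_mul_of_nonneg_left h1 (by positivity))
    have hfin : 4 * (N:ℝ) * ((1 + M) * ((N:ℝ) * a + (b + dr))) ≤
        (8 * ((N:ℝ) + 2) ^ 2 * (1 + M)) * (a + b + dr) := by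
      have key : 4 * (N:ℝ) * ((N:ℝ) * a + (b + dr)) ≤ 8 * ((N:ℝ) + 2) ^ 2 * (a + b + dr) := by
        nlinarith [ha, hb, hdr, hN1, sq_nonneg ((N:ℝ) - 2), mul_nonneg ha (sq_nonneg ((N:ℝ) + 2)),
          mul_nonneg hb (Nat.cast_nonneg N), mul_nonneg hdr (Nat.cast_nonneg N)]
      nlinarith [key, hM.le, mul_nonneg (mul_nonneg (by positivity : (0:ℝ) ≤ 4 * (N:ℝ)) hM.le)
        (by positivity : (0:ℝ) ≤ (N:ℝ) * a + (b + dr))]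
    calc (k:ℝ) * ‖c k‖ ≤ 4 * (N:ℝ) * ((1 + M) * ((N:ℝ) * a + (b + dr))) := h3
      _ ≤ _ := by push_cast; push_cast at hfin; linarith

end Stmt15Aux

/-- `K(θ) = {z ∈ ℂ : |arg z| ≤ θ}`. -/
def Kset (θ : ℝ) : Set ℂ := {z : ℂ | |Complex.arg z| ≤ θ}

/-- The class GBV: `c_n ∈ K(θ₁)` for some `θ₁ ∈ [0, π/2)` and all `n ≥ 1`, and
`Σ_{n=m}^{2m} |Δc_n| ≤ M · max_{m ≤ n < m+N₀} |c_n|` for all `m ≥ 1`. -/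
def GBV (c : ℕ → ℂ) : Prop :=
  (∃ θ₁ : ℝ, 0 ≤ θ₁ ∧ θ₁ < Real.pi / 2 ∧ ∀ n, 1 ≤ n → c n ∈ Kset θ₁) ∧
  (∃ N₀ : ℕ, 1 ≤ N₀ ∧ ∃ M : ℝ, 0 < M ∧ ∀ m, 1 ≤ m →
    (∑ n ∈ Finset.Icc m (2 * m), ‖c n - c (n + 1)‖) ≤
      M * ⨆ n ∈ Finset.Ico m (m + N₀), ‖c n‖)

set_option maxHeartbeats 1000000 in
/-- Under the GBV hypotheses with `f ∈ C_{2π}`, for all sufficiently large `n`: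
`sup_{k≥2n+1} k|f̂(k)| ≤ C·(max_{1≤k≤n} k|f̂(n+k)| + sup_{k≥2n+1} k|f̂(k)−f̂(−k)|
 + Σ_{k=2n+1}^∞ |f̂(k)+f̂(−k)|)` (suprema and the tail sum taken in `ℝ≥0∞`). -/
theorem stmt_15 (fhat : ℤ → ℂ) (f : ℝ → ℂ)
    (h1 : GBV (fun n : ℕ => fhat (n : ℤ)))
    (h2 : GBV (fun n : ℕ => fhat (n : ℤ) + fhat (-(n : ℤ))))
    (hconv : ∀ x : ℝ, Filter.Tendsto
      (fun N : ℕ => ∑ k ∈ Finset.Icc (-(N : ℤ)) (N : ℤ),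
        fhat k * Complex.exp ((k : ℂ) * (x : ℂ) * Complex.I))
      Filter.atTop (nhds (f x)))
    (hcont : Continuous f) :
    ∃ C : ℝ≥0, 0 < C ∧ ∀ᶠ n : ℕ in Filter.atTop,
      (⨆ k : ℕ, ⨆ _ : 2 * n + 1 ≤ k, (k : ℝ≥0∞) * (‖fhat (k : ℤ)‖₊ : ℝ≥0∞))
      ≤ (C : ℝ≥0∞) *
      ((⨆ k ∈ Finset.Icc 1 n, (k : ℝ≥0∞) * (‖fhat ((n : ℤ) + (k : ℤ))‖₊ : ℝ≥0∞))
      + (⨆ k : ℕ, ⨆ _ : 2 * n + 1 ≤ k, (k : ℝ≥0∞) *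
          (‖fhat (k : ℤ) - fhat (-(k : ℤ))‖₊ : ℝ≥0∞))
      + (∑' k : ℕ, (‖fhat ((2 * n + 1 + k : ℕ) : ℤ) + fhat (-((2 * n + 1 + k : ℕ) : ℤ))‖₊ : ℝ≥0∞))) := by
  obtain ⟨-, N, hN, M, hM, hvar⟩ := h1
  have hCrpos : (0:ℝ) < 8 * ((N:ℝ) + 2) ^ 2 * (1 + M) := by positivity
  refine ⟨(8 * ((N:ℝ) + 2) ^ 2 * (1 + M)).toNNReal, Real.toNNReal_pos.2 hCrpos, ?_⟩
  have hCne : (((8 * ((N:ℝ) + 2) ^ 2 * (1 + M)).toNNReal : ℝ≥0) : ℝ≥0∞) ≠ 0 := by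
    simp only [ne_eq, ENNReal.coe_eq_zero]
    exact (Real.toNNReal_pos.2 hCrpos).ne'
  filter_upwards [Filter.eventually_ge_atTop (2 * N + 2)] with n hn
  set A := (⨆ k ∈ Finset.Icc 1 n, (k : ℝ≥0∞) * (‖fhat ((n : ℤ) + (k : ℤ))‖₊ : ℝ≥0∞)) with hAdef
  set B := (⨆ k : ℕ, ⨆ _ : 2 * n + 1 ≤ k, (k : ℝ≥0∞) *
      (‖fhat (k : ℤ) - fhat (-(k : ℤ))‖₊ : ℝ≥0∞)) with hBdef
  set D := (∑' k : ℕ, (‖fhat ((2 * n + 1 + k : ℕ) : ℤ) +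
      fhat (-((2 * n + 1 + k : ℕ) : ℤ))‖₊ : ℝ≥0∞)) with hDdef
  rcases eq_or_ne A ⊤ with hA | hA
  · have hsum : A + B + D = ⊤ := by simp [hA]
    rw [hsum, ENNReal.mul_top hCne]
    exact le_top
  rcases eq_or_ne B ⊤ with hB | hB
  · have hsum : A + B + D = ⊤ := by simp [hB]
    rw [hsum, ENNReal.mul_top hCne]
    exact le_top
  rcases eq_or_ne D ⊤ with hD | hD
  · have hsum : A + B + D = ⊤ := by simp [hD]
    rw [hsum, ENNReal.mul_top hCne]
    exact le_top
  -- the pointwise real bounds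
  have hP1 : ∀ t : ℕ, 1 ≤ t → t ≤ n →
      (t:ℝ) * ‖fhat ((n + t : ℕ) : ℤ)‖ ≤ A.toReal := by
    intro t h1t htn
    have hmem : t ∈ Finset.Icc 1 n := Finset.mem_Icc.2 ⟨h1t, htn⟩
    have hle : (t : ℝ≥0∞) * (‖fhat ((n : ℤ) + (t : ℤ))‖₊ : ℝ≥0∞) ≤ A := by
      rw [hAdef]
      exact le_iSup₂ (f := fun (j : ℕ) (_ : j ∈ Finset.Icc 1 n) =>
        (j : ℝ≥0∞) * (‖fhat ((n : ℤ) + (j : ℤ))‖₊ : ℝ≥0∞)) t hmem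
    have h2 := ENNReal.toReal_mono hA hle
    rw [ENNReal.toReal_mul, ENNReal.toReal_natCast, ENNReal.coe_toReal, coe_nnnorm] at h2
    have hidx : ((n + t : ℕ) : ℤ) = (n : ℤ) + (t : ℤ) := by push_cast; ring
    rw [hidx]
    exact h2
  have hP2 : ∀ j : ℕ, 2 * n + 1 ≤ j →
      (j:ℝ) * ‖fhat (j : ℤ) - fhat (-(j : ℤ))‖ ≤ B.toReal := by
    intro j hj
    have hle : (j : ℝ≥0∞) * (‖fhat (j : ℤ) - fhat (-(j : ℤ))‖₊ : ℝ≥0∞) ≤ B := by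
      rw [hBdef]
      exact le_iSup₂ (f := fun (i : ℕ) (_ : 2 * n + 1 ≤ i) =>
        (i : ℝ≥0∞) * (‖fhat (i : ℤ) - fhat (-(i : ℤ))‖₊ : ℝ≥0∞)) j hj
    have h2 := ENNReal.toReal_mono hB hle
    rw [ENNReal.toReal_mul, ENNReal.toReal_natCast, ENNReal.coe_toReal, coe_nnnorm] at h2
    exact h2
  have hP3 : ∀ K : ℕ, (∑ j ∈ Finset.Ico (2 * n + 1) K,
      ‖fhat (j : ℤ) + fhat (-(j : ℤ))‖) ≤ D.toReal := by
    intro K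
    have h1 : (∑ j ∈ Finset.Ico (2 * n + 1) K,
        (‖fhat (j : ℤ) + fhat (-(j : ℤ))‖₊ : ℝ≥0∞)) ≤ D := by
      rw [Finset.sum_Ico_eq_sum_range, hDdef]
      exact ENNReal.sum_le_tsum _
    have h2 := ENNReal.toReal_mono hD h1
    rw [ENNReal.toReal_sum (fun a _ => ENNReal.coe_ne_top)] at h2
    simpa [ENNReal.coe_toReal, coe_nnnorm] using h2
  refine iSup_le fun k => iSup_le fun hk => ?_
  have hcore := Stmt15Aux.core (fun j : ℕ => fhat (j : ℤ)) (fun j : ℕ => fhat (-(j : ℤ)))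
    N hN M hM hvar n k hn hk A.toReal B.toReal D.toReal
    ENNReal.toReal_nonneg ENNReal.toReal_nonneg ENNReal.toReal_nonneg hP1 hP2 hP3
  have l1 : (k : ℝ≥0∞) * (‖fhat (k : ℤ)‖₊ : ℝ≥0∞) =
      ENNReal.ofReal ((k:ℝ) * ‖fhat (k : ℤ)‖) := by
    rw [ENNReal.ofReal_mul (Nat.cast_nonneg k), ENNReal.ofReal_natCast]
    congr 1
    exact (ofReal_norm _).symm
  rw [l1]
  calc ENNReal.ofReal ((k:ℝ) * ‖fhat (k : ℤ)‖)
      ≤ ENNReal.ofReal ((8 * ((N:ℝ) + 2) ^ 2 * (1 + M)) * (A.toReal + B.toReal + D.toReal)) := by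
        exact ENNReal.ofReal_le_ofReal hcore
    _ = ENNReal.ofReal (8 * ((N:ℝ) + 2) ^ 2 * (1 + M)) *
        ENNReal.ofReal (A.toReal + B.toReal + D.toReal) := by
        rw [ENNReal.ofReal_mul hCrpos.le]
    _ = ENNReal.ofReal (8 * ((N:ℝ) + 2) ^ 2 * (1 + M)) * (A + B + D) := by
        rw [ENNReal.ofReal_add (add_nonneg ENNReal.toReal_nonneg ENNReal.toReal_nonneg)
          ENNReal.toReal_nonneg,
          ENNReal.ofReal_add ENNReal.toReal_nonneg ENNReal.toReal_nonneg,
          ENNReal.ofReal_toReal hA, ENNReal.ofReal_toReal hB, ENNReal.ofReal_toReal hD]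
    _ = _ := rfl
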